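/- Let n ≥ 3 and let G be a subgroup of S_n. Then G is weakly representable — i.e., there exist integers k, m with 2 ≤ k < n and m ≥ 2 and a function f : ({1,…,k}^n) → {1,…,m} whose invariance group {σ ∈ S_n : f(x) = f(x∘σ) for all x} equals G — if and only if G is not the alternating group A_n. -/

import Mathlib

/-- `σ ⊢ f`: the permutation `σ` leaves the function `f : ({1,…,k}^Ω) → {1,…,k}` invariant. -/
def InvariantUnder {Ω : Type*} (k : ℕ) (σ : Equiv.Perm Ω) (f : (Ω → Fin k) → Fin k) : Prop :=
  ∀ x : Ω → Fin k, f x = f (fun i => x (σ i))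

/-- The Galois closure over `k` of a subgroup `G` of the symmetric group on `Ω`. -/
def galoisClosure {Ω : Type*} (k : ℕ) (G : Subgroup (Equiv.Perm Ω)) : Set (Equiv.Perm Ω) :=
  {σ | ∀ f : (Ω → Fin k) → Fin k, (∀ π ∈ G, InvariantUnder k π f) → InvariantUnder k σ f}

/-- `G` is Galois closed over `k`. -/
def IsGaloisClosed {Ω : Type*} (k : ℕ) (G : Subgroup (Equiv.Perm Ω)) : Prop :=
  galoisClosure k G = (G : Set (Equiv.Perm Ω))

open Equiv Equiv.Perm

lemma keyx {n : ℕ} (hn : 3 ≤ n) (ρ : Equiv.Perm (Fin n))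
    (h : ∀ i : Fin n, (ρ i).val - 1 = i.val - 1) :
    ρ = 1 ∨ ρ = Equiv.swap ⟨0, by omega⟩ ⟨1, by omega⟩ := by
  have hfix : ∀ i : Fin n, 2 ≤ i.val → ρ i = i := by
    intro i hi
    have h1 := h i
    exact Fin.ext (by omega)
  have key : ∀ i : Fin n, i.val ≤ 1 → (ρ i).val ≤ 1 := by
    intro i hi
    have := h i
    omega
  have h0 : (ρ ⟨0, by omega⟩).val ≤ 1 := key _ (by simp)
  have h1 : (ρ ⟨1, by omega⟩).val ≤ 1 := key _ (by simp)
  have hne : (ρ ⟨0, by omega⟩).val ≠ (ρ ⟨1, by omega⟩).val := by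
    intro e
    have := ρ.injective (Fin.ext e)
    simp [Fin.ext_iff] at this
  have gen : ∀ i : Fin n, i.val = 0 → ρ i = ρ ⟨0, by omega⟩ := by
    intro i hi; exact congrArg ρ (Fin.ext (by simpa using hi))
  have gen1 : ∀ i : Fin n, i.val = 1 → ρ i = ρ ⟨1, by omega⟩ := by
    intro i hi; exact congrArg ρ (Fin.ext (by simpa using hi))
  by_cases hc : (ρ ⟨0, by omega⟩).val = 0
  · left
    ext i
    rw [Equiv.Perm.one_apply]
    rcases Nat.lt_or_ge i.val 2 with hi | hi
    · rcases Nat.lt_or_ge i.val 1 with hi0 | hi1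
      · rw [gen i (by omega)]; omega
      · rw [gen1 i (by omega)]; omega
    · rw [hfix i hi]
  · right
    have hc0 : (ρ ⟨0, by omega⟩).val = 1 := by omega
    have hc1 : (ρ ⟨1, by omega⟩).val = 0 := by omega
    ext i
    rcases Nat.lt_or_ge i.val 2 with hi | hi
    · rcases Nat.lt_or_ge i.val 1 with hi0 | hi1
      · have hieq : i = (⟨0, by omega⟩ : Fin n) := Fin.ext (by simpa using (by omega : i.val = 0))
        rw [hieq, Equiv.swap_apply_left]
        exact hc0
      · have hieq : i = (⟨1, by omega⟩ : Fin n) := Fin.ext (by simpa using (by omega : i.val = 1))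
        rw [hieq, Equiv.swap_apply_right]
        exact hc1
    · rw [hfix i hi, Equiv.swap_apply_of_ne_of_ne]
      · intro e; rw [e] at hi; simp at hi
      · intro e; rw [e] at hi; simp at hi

lemma pairfun {n : ℕ} (hn : 3 ≤ n) (a b : Fin n) (hab : a ≠ b) :
    ∃ x : Fin n → Fin (n - 1), ∀ ρ : Equiv.Perm (Fin n),
      (∀ i, x (ρ i) = x i) → ρ = 1 ∨ ρ = Equiv.swap a b := by
  set p0 : Fin n := ⟨0, by omega⟩ with hp0
  set p1 : Fin n := ⟨1, by omega⟩ with hp1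
  have hp : p0 ≠ p1 := by simp [hp0, hp1, Fin.ext_iff]
  set c1 := Equiv.swap p0 a with hc1
  set b' := c1 b with hb'def
  have hb'p0 : b' ≠ p0 := by
    intro e
    have : c1 b = c1 a := by rw [← hb'def, e, hc1]; exact (Equiv.swap_apply_right p0 a).symm
    exact hab.symm (c1.injective this)
  set c := Equiv.swap p1 b' * c1 with hc
  have hca : c a = p0 := by
    rw [hc, Equiv.Perm.mul_apply, hc1, Equiv.swap_apply_right,
      Equiv.swap_apply_of_ne_of_ne hp (Ne.symm hb'p0)]
  have hcb : c b = p1 := by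
    rw [hc, Equiv.Perm.mul_apply, ← hb'def, Equiv.swap_apply_right]
  refine ⟨fun i => ⟨(c i).val - 1, by have := (c i).isLt; omega⟩, fun ρ hρ => ?_⟩
  have hval : ∀ j : Fin n, ((c * ρ * c⁻¹) j).val - 1 = j.val - 1 := by
    intro j
    have h1 := hρ (c⁻¹ j)
    rw [Fin.mk.injEq] at h1
    simpa [Equiv.Perm.mul_apply] using h1
  have hps : Equiv.swap p0 p1 = c * Equiv.swap a b * c⁻¹ := by
    rw [← hca, ← hcb]; exact Equiv.swap_apply_apply c a b
  rcases keyx hn _ hval with h1 | h2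
  · left
    have := congrArg (fun τ => c⁻¹ * τ * c) h1
    simpa [mul_assoc] using this
  · right
    have h2' : c * ρ * c⁻¹ = c * Equiv.swap a b * c⁻¹ := by
      rw [h2, ← hps]
    have := congrArg (fun τ => c⁻¹ * τ * c) h2'
    simpa [mul_assoc] using this

lemma threecycle_decomp {α : Type*} [Fintype α] [DecidableEq α] (θ : Equiv.Perm α)
    (hθ : θ.IsThreeCycle) :
    ∃ a b c : α, a ≠ b ∧ b ≠ c ∧ θ = Equiv.swap a b * Equiv.swap b c := by
  have hsupp : θ.support.card = 3 := hθ.card_support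
  have hne : θ.support.Nonempty := Finset.card_pos.mp (by omega)
  obtain ⟨a, ha⟩ := hne
  have haa : θ a ≠ a := Equiv.Perm.mem_support.mp ha
  set b := θ a with hb
  set c := θ b with hc
  have hord : θ ^ 3 = 1 := by
    have := hθ.orderOf
    rw [← this]; exact pow_orderOf_eq_one θ
  have h3 : θ c = a := by
    have := congrArg (fun τ => τ a) hord
    simpa [hc, hb, pow_succ, Equiv.Perm.mul_apply] using this
  have hbc : b ≠ c := by
    intro e
    exact haa (θ.injective (by rw [← hc, ← e]))
  have hca : c ≠ a := by
    intro e
    exact haa ((h3.symm.trans (congrArg θ e)).symm)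
  have hab : a ≠ b := Ne.symm haa
  refine ⟨a, b, c, hab, hbc, ?_⟩
  have hsub : ({a, b, c} : Finset α) ⊆ θ.support := by
    intro x hx
    simp only [Finset.mem_insert, Finset.mem_singleton] at hx
    rcases hx with rfl | rfl | rfl
    · exact ha
    · exact Equiv.Perm.mem_support.mpr (by rw [← hc]; exact Ne.symm hbc)
    · exact Equiv.Perm.mem_support.mpr (by rw [h3]; exact Ne.symm hca)
  have hcard : ({a, b, c} : Finset α).card = 3 := by
    rw [Finset.card_insert_of_notMem (by simp [hab, Ne.symm hca]),
      Finset.card_insert_of_notMem (by simp [hbc]), Finset.card_singleton]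
  have hseq : θ.support = {a, b, c} :=
    (Finset.eq_of_subset_of_card_le hsub (by omega)).symm
  ext x
  by_cases hx : x ∈ θ.support
  · rw [hseq] at hx
    simp only [Finset.mem_insert, Finset.mem_singleton] at hx
    rcases hx with rfl | rfl | rfl
    · rw [Equiv.Perm.mul_apply, Equiv.swap_apply_of_ne_of_ne hab (Ne.symm hca),
        Equiv.swap_apply_left, hb]
    · rw [Equiv.Perm.mul_apply, Equiv.swap_apply_left,
        Equiv.swap_apply_of_ne_of_ne hca (Ne.symm hbc), hc]
    · rw [Equiv.Perm.mul_apply, Equiv.swap_apply_right, Equiv.swap_apply_right]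
      exact h3
  · have h1 : θ x = x := Equiv.Perm.notMem_support.mp hx
    rw [hseq] at hx
    simp only [Finset.mem_insert, Finset.mem_singleton, not_or] at hx
    rw [h1, Equiv.Perm.mul_apply, Equiv.swap_apply_of_ne_of_ne hx.2.1 hx.2.2,
      Equiv.swap_apply_of_ne_of_ne hx.1 hx.2.1]

lemma subgrp_contra {n : ℕ} (hn : 3 ≤ n) (G : Subgroup (Equiv.Perm (Fin n)))
    (hG : G ≠ alternatingGroup (Fin n)) (σ : Equiv.Perm (Fin n)) (hσ : σ ∉ G)
    (h : ∀ a b : Fin n, a ≠ b → Equiv.swap a b * σ ∈ G) : False := by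
  have hprod : ∀ a b c d : Fin n, a ≠ b → c ≠ d →
      Equiv.swap a b * Equiv.swap c d ∈ G := by
    intro a b c d hab hcd
    have hm := mul_mem (h a b hab) (inv_mem (h c d hcd))
    have : (Equiv.swap a b * σ) * (Equiv.swap c d * σ)⁻¹
        = Equiv.swap a b * Equiv.swap c d := by
      rw [mul_inv_rev, Equiv.swap_inv]
      group
    rwa [this] at hm
  have hA : alternatingGroup (Fin n) ≤ G := by
    rw [← Equiv.Perm.closure_three_cycles_eq_alternating]
    rw [Subgroup.closure_le]
    intro θ hθ
    obtain ⟨a, b, c, hab, hbc, hdec⟩ := threecycle_decomp θ hθ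
    rw [SetLike.mem_coe, hdec]
    exact hprod a b b c hab hbc
  have hlt : alternatingGroup (Fin n) < G := lt_of_le_of_ne hA (Ne.symm hG)
  obtain ⟨τ, hτG, hτA⟩ := SetLike.exists_of_lt hlt
  have hsτ : Equiv.Perm.sign τ = -1 := by
    rcases Int.units_eq_one_or (Equiv.Perm.sign τ) with h1 | h1
    · exact absurd (Equiv.Perm.mem_alternatingGroup.mpr h1) hτA
    · exact h1
  rcases Int.units_eq_one_or (Equiv.Perm.sign σ) with h1 | h1
  · exact hσ (hA (Equiv.Perm.mem_alternatingGroup.mpr h1))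
  · have heven : σ * τ⁻¹ ∈ alternatingGroup (Fin n) := by
      rw [Equiv.Perm.mem_alternatingGroup]
      simp [h1, hsτ]
    have : σ = (σ * τ⁻¹) * τ := by group
    exact hσ (this ▸ mul_mem (hA heven) hτG)

/-- A subgroup `G ≤ S_n` is weakly representable (it is the invariance group of a function
`f : {1,…,k}^n → {1,…,m}` for some `2 ≤ k < n` and `m ≥ 2`) iff `G ≠ A_n`. -/
theorem stmt_5 (n : ℕ) (hn : 3 ≤ n) (G : Subgroup (Equiv.Perm (Fin n))) :
    (∃ k m : ℕ, 2 ≤ k ∧ k < n ∧ 2 ≤ m ∧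
      ∃ f : (Fin n → Fin k) → Fin m,
        {σ : Equiv.Perm (Fin n) | ∀ x : Fin n → Fin k, f x = f (fun i => x (σ i))}
          = (G : Set (Equiv.Perm (Fin n))))
      ↔ G ≠ alternatingGroup (Fin n) := by
  constructor
  · rintro ⟨k, m, hk2, hkn, hm2, f, hf⟩ hGA
    rw [hGA] at hf
    set σ₀ := Equiv.swap (⟨0, by omega⟩ : Fin n) ⟨1, by omega⟩ with hσ₀def
    have h01 : (⟨0, by omega⟩ : Fin n) ≠ ⟨1, by omega⟩ := by simp [Fin.ext_iff]
    have hσ₀ : σ₀ ∈ {σ : Equiv.Perm (Fin n) |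
        ∀ x : Fin n → Fin k, f x = f (fun i => x (σ i))} := by
      intro x
      obtain ⟨i, j, hij, hxij⟩ := Fintype.exists_ne_map_eq_of_card_lt x (by simpa using hkn)
      have hτx : ∀ l, x (Equiv.swap i j l) = x l := by
        intro l
        rcases eq_or_ne l i with rfl | hli
        · rw [Equiv.swap_apply_left]; exact hxij.symm
        rcases eq_or_ne l j with rfl | hlj
        · rw [Equiv.swap_apply_right]; exact hxij
        · rw [Equiv.swap_apply_of_ne_of_ne hli hlj]
      have hmemA : Equiv.swap i j * σ₀ ∈ alternatingGroup (Fin n) := by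
        rw [Equiv.Perm.mem_alternatingGroup, map_mul, Equiv.Perm.sign_swap hij,
          hσ₀def, Equiv.Perm.sign_swap h01]
        norm_num
      have h2 : f x = f (fun l => x ((Equiv.swap i j * σ₀) l)) := by
        have hmem : Equiv.swap i j * σ₀ ∈ {σ : Equiv.Perm (Fin n) |
            ∀ x : Fin n → Fin k, f x = f (fun i => x (σ i))} := by
          rw [hf]; exact hmemA
        exact hmem x
      rw [h2]
      exact congrArg f (funext fun l => hτx (σ₀ l))
    rw [hf] at hσ₀
    have : Equiv.Perm.sign σ₀ = 1 := Equiv.Perm.mem_alternatingGroup.mp hσ₀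
    rw [hσ₀def, Equiv.Perm.sign_swap h01] at this
    exact absurd this (by decide)
  · intro hGA
    haveI : Fintype G := Fintype.ofFinite G
    refine ⟨n - 1, (n - 1) ^ n, by omega, by omega, Nat.one_lt_pow (by omega) (by omega), ?_⟩
    set e : (Fin n → Fin (n - 1)) ≃ Fin ((n - 1) ^ n) := finFunctionFinEquiv with he
    set orb : (Fin n → Fin (n - 1)) → Finset (Fin ((n - 1) ^ n)) :=
      fun x => Finset.image
        (fun g : G => e (fun i => x ((g : Equiv.Perm (Fin n)) i))) Finset.univ with horb
    have hone : ∀ x, (orb x).Nonempty :=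
      fun x => ⟨_, Finset.mem_image_of_mem _ (Finset.mem_univ (1 : G))⟩
    refine ⟨fun x => (orb x).min' (hone x), ?_⟩
    have claim1 : ∀ (x : Fin n → Fin (n - 1)) (g : Equiv.Perm (Fin n)), g ∈ G →
        orb (fun i => x (g i)) = orb x := by
      intro x g hg
      ext t
      simp only [horb, Finset.mem_image, Finset.mem_univ, true_and]
      constructor
      · rintro ⟨h, rfl⟩
        refine ⟨⟨g, hg⟩ * h, ?_⟩
        rfl
      · rintro ⟨h', rfl⟩
        refine ⟨⟨g, hg⟩⁻¹ * h', ?_⟩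
        congr 1
        funext i
        simp [Equiv.Perm.mul_apply]
    have claim2 : ∀ x y : Fin n → Fin (n - 1),
        (orb x).min' (hone x) = (orb y).min' (hone y) →
        ∃ g h : G, (fun i => x ((g : Equiv.Perm (Fin n)) i))
          = fun i => y ((h : Equiv.Perm (Fin n)) i) := by
      intro x y hxy
      have hx := (orb x).min'_mem (hone x)
      have hy := (orb y).min'_mem (hone y)
      rw [hxy] at hx
      simp only [horb, Finset.mem_image, Finset.mem_univ, true_and] at hx hy
      obtain ⟨g, hgeq⟩ := hx
      obtain ⟨h, hheq⟩ := hy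
      exact ⟨g, h, e.injective (by rw [hgeq, hheq])⟩
    ext σ
    simp only [Set.mem_setOf_eq, SetLike.mem_coe]
    constructor
    · intro hσ
      by_contra hσG
      refine subgrp_contra hn G hGA σ hσG ?_
      intro a b hab
      obtain ⟨x, hx⟩ := pairfun hn a b hab
      obtain ⟨g, h, heq⟩ := claim2 x (fun i => x (σ i)) (hσ x)
      have heq' : ∀ i, x ((g : Equiv.Perm (Fin n)) i)
          = x (σ ((h : Equiv.Perm (Fin n)) i)) := fun i => congrFun heq i
      have hρ : ∀ j, x ((σ * (h : Equiv.Perm (Fin n)) * (g : Equiv.Perm (Fin n))⁻¹) j)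
          = x j := by
        intro j
        have := heq' ((g : Equiv.Perm (Fin n))⁻¹ j)
        simp only [Equiv.Perm.mul_apply]
        rw [← this]
        congr 1
        exact (Equiv.apply_symm_apply _ j)
      rcases hx _ hρ with h1 | h1
      · exfalso
        apply hσG
        have : σ = (g : Equiv.Perm (Fin n)) * (h : Equiv.Perm (Fin n))⁻¹ := by
          have := congrArg (fun τ => τ * (g : Equiv.Perm (Fin n))
            * (h : Equiv.Perm (Fin n))⁻¹) h1
          simpa [mul_assoc] using this
        rw [this]
        exact mul_mem g.2 (inv_mem h.2)
      · have : Equiv.swap a b * σ = (g : Equiv.Perm (Fin n))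
            * (h : Equiv.Perm (Fin n))⁻¹ := by
          have := congrArg (fun τ => Equiv.swap a b * τ * (g : Equiv.Perm (Fin n))
            * (h : Equiv.Perm (Fin n))⁻¹) h1
          rw [← mul_assoc] at this
          simpa [mul_assoc] using this
        rw [this]
        exact mul_mem g.2 (inv_mem h.2)
    · intro hσ x
      have h1 : orb (fun i => x (σ i)) = orb x := claim1 x σ hσ
      have hmc : ∀ (s t : Finset (Fin ((n - 1) ^ n))) (hs : s.Nonempty) (ht : t.Nonempty),
          s = t → s.min' hs = t.min' ht := by
        rintro s t hs ht rfl; rfl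
      exact hmc _ _ _ _ h1.symm
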